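/- Let δ < ω^ω. A set I ⊆ δ is called a skeleton of δ if: (S1) I is closed in δ in the order topology; (S2) the order type of I is δ; (S3) for all α, β ∈ I, α ⊑ β iff f(α) ⊑ f(β), where f is the order isomorphism from I onto δ and ⊑ is the Cantor–Bendixson anti-tree order. Prove: if I is a skeleton of δ then for every α ∈ I, CB(α) = CB(f(α)), where CB denotes Cantor-Bendixson rank. -/

import Mathlib

open Ordinal

universe u

/-- Cantor–Bendixson rank: the last exponent of the Cantor normal form (`CB 0 = 0`). -/
noncomputable def CB (o : Ordinal) : Ordinal :=
  ((Ordinal.CNF Ordinal.omega0 o).getLast?).elim 0 Prod.fst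

/-- The last coefficient of the Cantor normal form. -/
noncomputable def lastCoeff (o : Ordinal) : Ordinal :=
  ((Ordinal.CNF Ordinal.omega0 o).getLast?).elim 0 Prod.snd

/-- The position of `o` in its fan: the last coefficient of the Cantor normal form,
with the convention `i(n) = n + 1` for natural numbers `n` (virtually omitting `0`). -/
noncomputable def placeInFan (o : Ordinal) : Ordinal :=
  if o < Ordinal.omega0 then o + 1 else lastCoeff o

/-- The anti-tree order: `treeOrd β α` iff `α = β + ω ^ γ` for some `γ > CB β`. -/
def treeOrd (β α : Ordinal) : Prop :=
  ∃ γ : Ordinal, CB β < γ ∧ α = β + Ordinal.omega0 ^ γ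

/-- The immediate `treeOrd`-successor of `β`. -/
noncomputable def treeSucc (β : Ordinal) : Ordinal :=
  β + Ordinal.omega0 ^ (CB β + 1)

/-- The set of immediate `treeOrd`-predecessors of `α`. -/
def subfan (α : Ordinal) : Set Ordinal := {γ | treeSucc γ = α}

/-- The fan of `β`: the set of immediate predecessors of the immediate successor of `β`. -/
def fan (β : Ordinal) : Set Ordinal := subfan (treeSucc β)

open Classical in
/-- The order type of a set of ordinals: the unique `δ` with `S ≃o Set.Iio δ` (0 if none). -/
noncomputable def otp (S : Set Ordinal.{u}) : Ordinal.{u} :=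
  if h : ∃ δ : Ordinal.{u}, Nonempty (S ≃o Set.Iio δ) then h.choose else 0

/-- The image of `α ∈ S` under the unique order-preserving bijection of `S` with `otp S`. -/
noncomputable def ordIndex (S : Set Ordinal) (α : Ordinal) : Ordinal :=
  otp {x | x ∈ S ∧ x < α}

/-- `I` is closed in the ordinal `δ` (with its order topology). -/
def closedIn (I : Set Ordinal) (δ : Ordinal) : Prop :=
  IsClosed {x : Set.Iio δ | (x : Ordinal) ∈ I}

/-- `X` is closed in its supremum. -/
def ClosedInSup (X : Set Ordinal) : Prop := closedIn X (sSup X)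

/-- `I` is a skeleton of the ordinal `δ`. -/
def IsSkelOrd (I : Set Ordinal) (δ : Ordinal) : Prop :=
  I ⊆ Set.Iio δ ∧ closedIn I δ ∧ otp I = δ ∧
    ∀ α ∈ I, ∀ β ∈ I, (treeOrd α β ↔ treeOrd (ordIndex I α) (ordIndex I β))

/-- `I` is a skeleton of the set `J`. -/
def IsSkelSet (I J : Set Ordinal) : Prop :=
  I ⊆ J ∧ IsSkelOrd (ordIndex J '' I) (otp J)

/-- `I` is an `n`-skeleton of the set `J`. -/
def IsNSkelSet (n : ℕ) (I J : Set Ordinal) : Prop :=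
  IsSkelSet I J ∧
    ∀ α ∈ J, (fan α ∩ I).Nonempty → placeInFan (ordIndex J α) ≤ (n : Ordinal) → α ∈ I

/-- A collection `(I i)_{i < γ}` of subsets of `δ` is fan preserving. -/
def FanPreserving (γ : Ordinal) (I : Ordinal → Set Ordinal) (δ : Ordinal) : Prop :=
  ∀ α ≤ γ, Order.IsSuccLimit α → ∀ β < δ, (∀ i < α, (fan β ∩ I i).Infinite) →
    (fan β ∩ ⋂ i ∈ Set.Iio α, I i).Infinite

/-- Sum of the first `i` terms `ω ^ γ` of a Cantor normal form list. -/
noncomputable def partialSum (l : List Ordinal) (i : ℕ) : Ordinal :=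
  ((l.take i).map fun γ => Ordinal.omega0 ^ γ).sum

/-- The `i`-th component `C_i` of the Cantor normal form decomposition (for `1 ≤ i`). -/
noncomputable def comp (l : List Ordinal) (i : ℕ) : Set Ordinal :=
  {β | partialSum l (i - 1) < β ∧ β ≤ partialSum l i}

/-- `subtree α` is `{α} ∪ {β : β ⊏ α}`. -/
def subtree (α : Ordinal) : Set Ordinal := insert α {β | treeOrd β α}

/-- `Tlevel α n` is the set of elements of CB rank `n` in the tree below `α`. -/
def Tlevel (α : Ordinal) (n : ℕ) : Set Ordinal := {β | β ∈ subtree α ∧ CB β = (n : Ordinal)}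

/-- `FpowAux k r j = F(ω^k)^r_{k-j}`, defined by downward recursion. -/
noncomputable def FpowAux (k r : ℕ) : ℕ → Set Ordinal
  | 0 => {Ordinal.omega0 ^ (k : Ordinal)}
  | j + 1 => {γ | treeSucc γ ∈ FpowAux k r j ∧ (r : Ordinal) < placeInFan γ}

/-- `F(ω^k)^r_n` (for `n ≤ k`). -/
noncomputable def Fpow (k r n : ℕ) : Set Ordinal := FpowAux k r (k - n)

/-- `F(α)^r_n`: the copy of `F(ω^k)^r_n` in the tree below `α`, where `k = CB α`. -/
noncomputable def Fgen (α : Ordinal) (r n : ℕ) : Set Ordinal :=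
  {β | β ∈ subtree α ∧ ∃ k : ℕ, (k : Ordinal) = CB α ∧ ordIndex (subtree α) β ∈ Fpow k r n}

/-- The collection of `r`-large subsets of `Tlevel α n`. -/
def LargeR (α : Ordinal) (r n : ℕ) : Set (Set Ordinal) :=
  {A | A ⊆ Tlevel α n ∧ Fgen α r n ⊆ A}

/-- The collection of large subsets of `Tlevel α n`. -/
def Large (α : Ordinal) (n : ℕ) : Set (Set Ordinal) := ⋃ r : ℕ, LargeR α r n

/-- The closed ordinal partition relation `β →_cl (α₀, α₁)²`. -/
def ClRamseyProp (β α₀ α₁ : Ordinal) : Prop :=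
  ∀ c : Ordinal → Ordinal → Fin 2,
    ∃ i : Fin 2, ∃ X : Set Ordinal, X ⊆ Set.Iio β ∧
      otp X = (if i = 0 then α₀ else α₁) ∧ ClosedInSup X ∧
      ∀ x ∈ X, ∀ y ∈ X, x < y → c x y = i



/-! ### Auxiliary lemmas -/

section Aux

lemma CB_zero' : CB 0 = 0 := by simp [CB]

lemma CB_eq_log_of_mod_zero {o : Ordinal.{u}} (ho : o ≠ 0)
    (h : o % omega0 ^ log omega0 o = 0) : CB o = log omega0 o := by
  unfold CB
  rw [CNF.ne_zero ho, h, CNF.zero_right]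
  simp

lemma CB_eq_tail {o : Ordinal.{u}} (ho : o ≠ 0)
    (h : o % omega0 ^ log omega0 o ≠ 0) : CB o = CB (o % omega0 ^ log omega0 o) := by
  unfold CB
  rw [CNF.ne_zero ho, CNF.ne_zero h, List.getLast?_cons_cons, ← CNF.ne_zero h]

lemma CB_add_opow (γ : Ordinal.{u}) : ∀ d : Ordinal.{u}, CB (d + omega0 ^ γ) = γ := by
  intro d
  induction d using Ordinal.induction with
  | h d IH =>
    have hy0 : d + omega0 ^ γ ≠ 0 :=
      ((opow_pos γ omega0_pos).trans_le le_add_self).ne'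
    have hγℓ : γ ≤ log omega0 (d + omega0 ^ γ) :=
      (opow_le_iff_le_log one_lt_omega0 hy0).1 le_add_self
    rcases eq_or_lt_of_le hγℓ with hE | hL
    · have hmod : (d + omega0 ^ γ) % omega0 ^ log omega0 (d + omega0 ^ γ) = 0 := by
        rw [← hE]
        have h1 : d + omega0 ^ γ = omega0 ^ γ * (d / omega0 ^ γ + 1) := by
          conv_lhs => rw [← div_add_mod d (omega0 ^ γ)]
          rw [add_assoc, add_omega0_opow (mod_lt d (opow_ne_zero γ omega0_ne_zero)),
            mul_add_one]
        rw [h1]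
        simp
      rw [CB_eq_log_of_mod_zero hy0 hmod, ← hE]
    · set ℓ := log omega0 (d + omega0 ^ γ) with hℓ
      have hωγℓ : omega0 ^ γ < omega0 ^ ℓ := (opow_lt_opow_iff_right one_lt_omega0).2 hL
      have hd : omega0 ^ ℓ ≤ d := by
        by_contra hcon
        push_neg at hcon
        exact absurd (principal_add_omega0_opow ℓ hcon hωγℓ)
          (not_lt.2 (opow_log_le_self omega0 hy0))
      have hr : d % omega0 ^ ℓ < d :=
        lt_of_lt_of_le (mod_lt d (opow_ne_zero _ omega0_ne_zero)) hd
      have hsum : d % omega0 ^ ℓ + omega0 ^ γ < omega0 ^ ℓ :=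
        principal_add_omega0_opow ℓ (mod_lt d (opow_ne_zero _ omega0_ne_zero)) hωγℓ
      have hmod : (d + omega0 ^ γ) % omega0 ^ ℓ = d % omega0 ^ ℓ + omega0 ^ γ := by
        conv_lhs => rw [← div_add_mod d (omega0 ^ ℓ)]
        rw [add_assoc, mul_add_mod_self, mod_eq_of_lt hsum]
      have hne : (d + omega0 ^ γ) % omega0 ^ ℓ ≠ 0 := by
        rw [hmod]
        exact ((opow_pos γ omega0_pos).trans_le le_add_self).ne'
      rw [CB_eq_tail hy0 hne, hmod, IH _ hr]

lemma CB_decomp : ∀ y : Ordinal.{u}, y ≠ 0 → ∃ d, y = d + omega0 ^ CB y := by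
  intro y
  induction y using Ordinal.induction with
  | h y IH =>
    intro hy
    by_cases hr : y % omega0 ^ log omega0 y = 0
    · have hCB : CB y = log omega0 y := CB_eq_log_of_mod_zero hy hr
      have hcω : y / omega0 ^ log omega0 y < omega0 := div_opow_log_lt y one_lt_omega0
      obtain ⟨k, hk⟩ := lt_omega0.1 hcω
      have hc0 : y / omega0 ^ log omega0 y ≠ 0 := (div_opow_log_pos omega0 hy).ne'
      cases k with
      | zero => exact absurd (by simpa using hk) hc0
      | succ k =>
        refine ⟨omega0 ^ log omega0 y * k, ?_⟩
        rw [hCB]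
        conv_lhs => rw [← div_add_mod y (omega0 ^ log omega0 y)]
        rw [hr, add_zero, hk]
        push_cast
        rw [mul_add_one]
    · obtain ⟨d', hd'⟩ := IH _ (mod_opow_log_lt_self omega0 hy) hr
      refine ⟨omega0 ^ log omega0 y * (y / omega0 ^ log omega0 y) + d', ?_⟩
      rw [CB_eq_tail hy hr]
      conv_lhs => rw [← div_add_mod y (omega0 ^ log omega0 y)]
      rw [add_assoc, ← hd']

lemma opow_CB_le {y : Ordinal.{u}} (hy : y ≠ 0) : omega0 ^ CB y ≤ y := by
  obtain ⟨d, hd⟩ := CB_decomp y hy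
  have := le_add_self (a := omega0 ^ CB y) (b := d)
  rwa [← hd] at this

lemma CB_add {t : Ordinal.{u}} (d : Ordinal.{u}) (ht : t ≠ 0) : CB (d + t) = CB t := by
  obtain ⟨t₁, ht₁⟩ := CB_decomp t ht
  rw [show d + t = (d + t₁) + omega0 ^ CB t by rw [add_assoc, ← ht₁], CB_add_opow]

lemma CB_lt_of_lt_opow {t m : Ordinal.{u}} (ht : t ≠ 0) (h : t < omega0 ^ m) : CB t < m :=
  (opow_lt_opow_iff_right one_lt_omega0).1 ((opow_CB_le ht).trans_lt h)

lemma CB_succ (s : Ordinal.{u}) : CB (s + 1) = 0 := by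
  have := CB_add_opow 0 s
  rwa [opow_zero] at this

lemma Iio_orderIso_eq {a b : Ordinal.{u}} (h : Set.Iio a ≃o Set.Iio b) : a = b := by
  have e := ((ToType.mk (o := a)).symm.trans (h.trans (ToType.mk (o := b)))).toRelIsoLT
  have h2 := @RelIso.ordinal_type_eq _ _ _ _ isWellOrder_lt isWellOrder_lt e
  rwa [type_toType, type_toType] at h2

lemma otp_eq_of_iso {S : Set Ordinal.{u}} {μ : Ordinal.{u}} (h : S ≃o Set.Iio μ) :
    otp S = μ := by
  have hex : ∃ δ : Ordinal.{u}, Nonempty (S ≃o Set.Iio δ) := ⟨μ, ⟨h⟩⟩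
  unfold otp
  rw [dif_pos hex]
  obtain ⟨h'⟩ := hex.choose_spec
  exact Iio_orderIso_eq (h'.symm.trans h)

lemma ordIndex_eq_iso {I : Set Ordinal.{u}} {δ : Ordinal.{u}} (e : I ≃o Set.Iio δ)
    {x : Ordinal.{u}} (hx : x ∈ I) : ordIndex I x = (e ⟨x, hx⟩ : Ordinal) := by
  have iso : {z | z ∈ I ∧ z < x} ≃o Set.Iio ((e ⟨x, hx⟩ : Ordinal.{u})) := by
    refine StrictMono.orderIsoOfSurjective
      (fun z => ⟨(e ⟨z.1, z.2.1⟩ : Ordinal), ?_⟩) ?_ ?_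
    · have h1 : (⟨z.1, z.2.1⟩ : I) < ⟨x, hx⟩ := Subtype.mk_lt_mk.2 z.2.2
      exact Subtype.coe_lt_coe.2 (e.lt_iff_lt.2 h1)
    · intro z1 z2 h
      have h1 : (⟨z1.1, z1.2.1⟩ : I) < ⟨z2.1, z2.2.1⟩ := Subtype.mk_lt_mk.2 h
      exact Subtype.mk_lt_mk.2 (Subtype.coe_lt_coe.2 (e.lt_iff_lt.2 h1))
    · rintro ⟨w, hw⟩
      have hwδ : w < δ := lt_trans hw (e ⟨x, hx⟩).2
      set z := e.symm ⟨w, hwδ⟩ with hz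
      have hez : e z = ⟨w, hwδ⟩ := e.apply_symm_apply _
      have hzx : (z : Ordinal) < x := by
        have h1 : z < (⟨x, hx⟩ : I) := by
          rw [← e.lt_iff_lt, hez]
          exact Subtype.mk_lt_mk.2 hw
        exact h1
      refine ⟨⟨z.1, ⟨z.2, hzx⟩⟩, ?_⟩
      apply Subtype.ext
      show (e ⟨z.1, z.2⟩ : Ordinal) = w
      rw [show (⟨z.1, z.2⟩ : I) = z from rfl, hez]
  exact otp_eq_of_iso iso

lemma le_H_of_strictMono {H : Ordinal.{u} → Ordinal.{u}} {a : Ordinal.{u}}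
    (mono : ∀ s1 s2, s1 < s2 → s2 < a → H s1 < H s2) : ∀ s < a, s ≤ H s := by
  intro s
  induction s using Ordinal.induction with
  | h s IH =>
    intro hs
    by_contra hcon
    push_neg at hcon
    exact absurd (mono (H s) s hcon hs) (not_lt.2 (IH (H s) hcon (lt_trans hcon hs)))

end Aux

theorem stmt6 (δ : Ordinal) (hδ : δ < Ordinal.omega0 ^ Ordinal.omega0)
    (I : Set Ordinal) (hI : IsSkelOrd I δ) :
    ∀ α ∈ I, CB α = CB (ordIndex I α) := by
  obtain ⟨hsub, hclosed, hotp, hS3⟩ := hI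
  intro α hα
  by_cases hex : ∃ μ : Ordinal, Nonempty (I ≃o Set.Iio μ)
  case neg =>
    exfalso
    have h0 : otp I = 0 := by unfold otp; rw [dif_neg hex]
    rw [hotp] at h0
    have := hsub hα
    rw [h0] at this
    exact absurd this (by simp)
  case pos =>
  obtain ⟨h'⟩ := hex.choose_spec
  have hc : otp I = hex.choose := by unfold otp; rw [dif_pos hex]
  rw [hotp] at hc
  rw [← hc] at h'
  -- basic facts about f := ordIndex I
  have hfeq : ∀ x (hx : x ∈ I), ordIndex I x = ((h' ⟨x, hx⟩ : Set.Iio δ) : Ordinal) :=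
    fun x hx => ordIndex_eq_iso h' hx
  have hfI : ∀ x (hx : x ∈ I), ordIndex I x < δ := fun x hx => by
    rw [hfeq x hx]; exact (h' ⟨x, hx⟩).2
  have hmono : ∀ x (hx : x ∈ I) y (hy : y ∈ I),
      (ordIndex I x < ordIndex I y ↔ x < y) := by
    intro x hx y hy
    rw [hfeq x hx, hfeq y hy, Subtype.coe_lt_coe, h'.lt_iff_lt, Subtype.mk_lt_mk]
  have hfsurj : ∀ ζ, ζ < δ → ∃ x, ∃ hx : x ∈ I, ordIndex I x = ζ := by
    intro ζ hζ
    refine ⟨(h'.symm ⟨ζ, hζ⟩ : I).1, (h'.symm ⟨ζ, hζ⟩).2, ?_⟩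
    rw [hfeq _ (h'.symm ⟨ζ, hζ⟩).2, Subtype.coe_eta, h'.apply_symm_apply]
  have hfle : ∀ x, ∀ hx : x ∈ I, ordIndex I x ≤ x := by
    intro x
    induction x using Ordinal.induction with
    | h x IH =>
      intro hx
      by_contra hcon
      push_neg at hcon
      obtain ⟨z, hz, hfz⟩ := hfsurj x (lt_trans hcon (hfI x hx))
      have hzx : z < x := (hmono z hz x hx).1 (by rw [hfz]; exact hcon)
      have h2 := IH z hzx hz
      rw [hfz] at h2
      exact absurd h2 (not_le.2 hzx)
  -- Direction 1: CB (ordIndex I x) ≤ CB x, for every x ∈ I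
  have hE : ∀ x, ∀ hx : x ∈ I, CB (ordIndex I x) ≤ CB x := by
    intro x hx
    set n := CB (ordIndex I x) with hn
    set m := CB x with hm
    rcases eq_or_ne n 0 with h0 | h0
    · rw [h0]; exact zero_le
    have hβ0 : ordIndex I x ≠ 0 := fun h => h0 (by rw [hn, h, CB_zero'])
    have hx0 : x ≠ 0 := by
      intro h
      apply hβ0
      have h2 := hfle x hx
      have h2' : ordIndex I x ≤ 0 := le_trans h2 (le_of_eq h)
      exact le_antisymm h2' zero_le
    obtain ⟨bl, hbl⟩ := CB_decomp _ hβ0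
    rw [← hn] at hbl
    have hAne : {y : Ordinal | y + omega0 ^ m = x}.Nonempty := by
      obtain ⟨d, hd⟩ := CB_decomp x hx0
      rw [← hm] at hd
      exact ⟨d, hd.symm⟩
    set al := sInf {y : Ordinal | y + omega0 ^ m = x} with haldef
    have hal : al + omega0 ^ m = x := csInf_mem hAne
    have hω1n : (1 : Ordinal) < omega0 ^ n := by
      calc (1 : Ordinal) < omega0 := one_lt_omega0
      _ = omega0 ^ (1 : Ordinal) := (opow_one _).symm
      _ ≤ omega0 ^ n := opow_le_opow_right omega0_pos (Ordinal.one_le_iff_ne_zero.2 h0)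
    have key : ∀ s, s < omega0 ^ n →
        ∃ w, (w ∈ I) ∧ ordIndex I w = bl + (s + 1) ∧ al ≤ w ∧ w < x := by
      intro s hs
      have hs1 : s + 1 < omega0 ^ n := principal_add_omega0_opow _ hs hω1n
      have hzβ : bl + (s + 1) < ordIndex I x := by
        conv_rhs => rw [hbl]
        exact add_lt_add_right hs1 bl
      obtain ⟨w, hw, hfw⟩ := hfsurj _ (lt_trans hzβ (hfI x hx))
      have hs10 : s + 1 ≠ 0 := (lt_of_lt_of_le zero_lt_one (le_add_self (a := 1) (b := s))).ne'
      have htO : treeOrd (ordIndex I w) (ordIndex I x) := by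
        refine ⟨n, ?_, ?_⟩
        · rw [hfw, CB_add bl hs10, CB_succ]
          exact pos_iff_ne_zero.2 h0
        · rw [hfw, hbl, add_assoc, add_omega0_opow hs1]
      have htO' : treeOrd w x := (hS3 w hw x hx).2 htO
      obtain ⟨γ, hγ1, hγ2⟩ := htO'
      have hγm : γ = m := by rw [hm, hγ2, CB_add_opow]
      rw [hγm] at hγ2
      refine ⟨w, hw, hfw, csInf_le' hγ2.symm, ?_⟩
      calc w = w + 0 := (add_zero w).symm
      _ < w + omega0 ^ m := add_lt_add_right (opow_pos _ omega0_pos) w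
      _ = x := hγ2.symm
    choose W hWI hWf hWal hWx using key
    set H : Ordinal → Ordinal := fun s =>
      if hs : s < omega0 ^ n then W s hs - al else 0 with hHdef
    have hHval : ∀ s (hs : s < omega0 ^ n), H s = W s hs - al := by
      intro s hs
      rw [hHdef]
      exact dif_pos hs
    have halW : ∀ s (hs : s < omega0 ^ n), al + (W s hs - al) = W s hs :=
      fun s hs => Ordinal.add_sub_cancel_of_le (hWal s hs)
    have hHlt : ∀ s (hs : s < omega0 ^ n), H s < omega0 ^ m := by
      intro s hs
      rw [hHval s hs]
      have h1 : al + (W s hs - al) < al + omega0 ^ m := by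
        rw [halW s hs, hal]
        exact hWx s hs
      exact (add_lt_add_iff_left al).1 h1
    have hHmono : ∀ s1 s2, s1 < s2 → s2 < omega0 ^ n → H s1 < H s2 := by
      intro s1 s2 h12 h2
      have h1 : s1 < omega0 ^ n := lt_trans h12 h2
      rw [hHval s1 h1, hHval s2 h2]
      have hW12 : W s1 h1 < W s2 h2 := by
        refine (hmono _ (hWI s1 h1) _ (hWI s2 h2)).1 ?_
        rw [hWf s1 h1, hWf s2 h2]
        refine add_lt_add_right ?_ bl
        have hA : s1 + 1 ≤ s2 := by
          have := Order.succ_le_of_lt h12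
          rwa [← Ordinal.add_one_eq_succ] at this
        exact lt_of_le_of_lt hA (lt_add_one s2)
      by_contra hcon
      push_neg at hcon
      have h3 := add_le_add_right hcon al
      rw [halW s1 h1, halW s2 h2] at h3
      exact absurd hW12 (not_lt.2 h3)
    have hfinal : omega0 ^ n ≤ omega0 ^ m := by
      by_contra hcon
      push_neg at hcon
      exact absurd (lt_of_le_of_lt (le_H_of_strictMono hHmono _ hcon) (hHlt _ hcon))
        (lt_irrefl _)
    by_contra hcon2
    push_neg at hcon2
    exact absurd (lt_of_le_of_lt hfinal ((opow_lt_opow_iff_right one_lt_omega0).2 hcon2))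
      (lt_irrefl _)
  -- Direction 2: the climbing step
  have hStep : ∀ x, ∀ hx : x ∈ I, CB (ordIndex I x) < CB x →
      ∃ y, ∃ hy : y ∈ I, CB (ordIndex I y) < CB y ∧ CB x < CB y := by
    intro x hx hbad
    set n := CB (ordIndex I x) with hn
    set m := CB x with hm
    have hm0 : m ≠ 0 := ((zero_le (a := n)).trans_lt hbad).ne'
    have hx0 : x ≠ 0 := fun h => hm0 (by rw [hm, h, CB_zero'])
    obtain ⟨a0, ha0⟩ := CB_decomp x hx0
    rw [← hm] at ha0
    have hβδ : ordIndex I x < δ := hfI x hx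
    -- the bound β ≤ (a0 + 1) + ω ^ n
    have hbound : ordIndex I x ≤ (a0 + 1) + omega0 ^ n := by
      rcases eq_or_ne (ordIndex I x) 0 with hβ | hβ0
      · rw [hβ]; exact zero_le
      obtain ⟨d, hd⟩ := CB_decomp _ hβ0
      rw [← hn] at hd
      have hBne : {y : Ordinal | y + omega0 ^ n = ordIndex I x}.Nonempty := ⟨d, hd.symm⟩
      have hblB : sInf {y : Ordinal | y + omega0 ^ n = ordIndex I x} + omega0 ^ n
          = ordIndex I x := csInf_mem hBne
      have hble : sInf {y : Ordinal | y + omega0 ^ n = ordIndex I x} ≤ a0 + 1 := by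
        by_contra hgt
        push_neg at hgt
        have hsle : sInf {y : Ordinal | y + omega0 ^ n = ordIndex I x} ≤ ordIndex I x := by
          conv_rhs => rw [← hblB]
          exact le_self_add
        have hζβ : a0 + 1 < ordIndex I x := lt_of_lt_of_le hgt hsle
        obtain ⟨w, hw, hfw⟩ := hfsurj (a0 + 1) (lt_trans hζβ hβδ)
        have hwx : w < x := (hmono w hw x hx).1 (by rw [hfw]; exact hζβ)
        rcases le_or_gt w a0 with hle | hgt2
        · have h2 : a0 + 1 ≤ a0 := le_trans (hfw ▸ hfle w hw) hle
          have h3 : a0 < a0 + 1 := by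
            calc a0 = a0 + 0 := (add_zero a0).symm
            _ < a0 + 1 := add_lt_add_right zero_lt_one a0
          exact absurd h2 (not_le.2 h3)
        · have hat : a0 + (w - a0) = w := Ordinal.add_sub_cancel_of_le hgt2.le
          have ht0 : w - a0 ≠ 0 := by
            intro h
            rw [h, add_zero] at hat
            exact hgt2.ne hat
          have htm : w - a0 < omega0 ^ m := by
            have h4 : a0 + (w - a0) < a0 + omega0 ^ m := by
              rw [hat, ← ha0]
              exact hwx
            exact (add_lt_add_iff_left a0).1 h4
          have htw : treeOrd w x := by
            refine ⟨m, ?_, ?_⟩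
            · rw [← hat, CB_add a0 ht0]
              exact CB_lt_of_lt_opow ht0 htm
            · rw [← hat, add_assoc, add_omega0_opow htm, ← ha0]
          have h5 := (hS3 w hw x hx).1 htw
          rw [hfw] at h5
          obtain ⟨γ, hγ1, hγ2⟩ := h5
          have hγn : γ = n := by rw [hn, hγ2, CB_add_opow]
          rw [hγn] at hγ2
          have hmem : (a0 + 1) ∈ {y : Ordinal | y + omega0 ^ n = ordIndex I x} := hγ2.symm
          exact absurd (csInf_le' hmem) (not_le.2 hgt)
      calc ordIndex I x
          = sInf {y : Ordinal | y + omega0 ^ n = ordIndex I x} + omega0 ^ n := hblB.symm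
      _ ≤ (a0 + 1) + omega0 ^ n := add_le_add_left hble _
    have hn1m : n + 1 ≤ m := by
      have := Order.succ_le_of_lt hbad
      rwa [← Ordinal.add_one_eq_succ] at this
    have h1n : (1 : Ordinal) + omega0 ^ n < omega0 ^ (n + 1) := by
      refine principal_add_omega0_opow _ ?_ ?_
      · calc (1 : Ordinal) = omega0 ^ (0 : Ordinal) := (opow_zero _).symm
        _ < omega0 ^ (n + 1) := (opow_lt_opow_iff_right one_lt_omega0).2
            ((zero_le (a := n)).trans_lt (lt_add_one n))
      · exact (opow_lt_opow_iff_right one_lt_omega0).2 (lt_add_one n)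
    have hβ1x : ordIndex I x + omega0 ^ (n + 1) ≤ x := by
      calc ordIndex I x + omega0 ^ (n + 1)
          ≤ ((a0 + 1) + omega0 ^ n) + omega0 ^ (n + 1) := add_le_add_left hbound _
      _ = a0 + ((1 + omega0 ^ n) + omega0 ^ (n + 1)) := by rw [add_assoc, add_assoc, add_assoc]
      _ = a0 + omega0 ^ (n + 1) := by rw [add_omega0_opow h1n]
      _ ≤ a0 + omega0 ^ m := add_le_add_right (opow_le_opow_right omega0_pos hn1m) a0
      _ = x := ha0.symm
    have hβ1δ : ordIndex I x + omega0 ^ (n + 1) < δ := by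
      exact lt_of_le_of_lt hβ1x (hsub hx)
    obtain ⟨y, hy, hfy⟩ := hfsurj _ hβ1δ
    have hty : treeOrd x y := by
      refine (hS3 x hx y hy).2 ?_
      rw [hfy]
      exact ⟨n + 1, lt_add_one n, rfl⟩
    obtain ⟨γ, hγ1, hγ2⟩ := hty
    have hCBy : CB y = γ := by rw [hγ2, CB_add_opow]
    have hCBfy : CB (ordIndex I y) = n + 1 := by rw [hfy, CB_add_opow]
    refine ⟨y, hy, ?_, ?_⟩
    · rw [hCBy, hCBfy]
      exact lt_of_le_of_lt hn1m hγ1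
    · rw [hCBy]
      exact hγ1
  -- the climb: bad pairs of arbitrarily large rank
  have hclimb : CB (ordIndex I α) < CB α →
      ∀ k : ℕ, ∃ y, ∃ hy : y ∈ I, CB (ordIndex I y) < CB y ∧ (k : Ordinal) ≤ CB y := by
    intro hbad k
    induction k with
    | zero => exact ⟨α, hα, hbad, by simp⟩
    | succ k IHk =>
      obtain ⟨y, hy, hb, hk⟩ := IHk
      obtain ⟨y', hy', hb', hlt⟩ := hStep y hy hb
      refine ⟨y', hy', hb', ?_⟩
      have h2 : (k : Ordinal) + 1 ≤ CB y' := by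
        have := Order.succ_le_of_lt (lt_of_le_of_lt hk hlt)
        rwa [← Ordinal.add_one_eq_succ] at this
      calc ((k + 1 : ℕ) : Ordinal) = (k : Ordinal) + 1 := by push_cast; rfl
      _ ≤ CB y' := h2
  -- conclusion
  have hle1 : CB (ordIndex I α) ≤ CB α := hE α hα
  rcases lt_or_eq_of_le hle1 with hbad | heq
  · exfalso
    obtain ⟨c, hc, hδc⟩ := (lt_opow_of_isSuccLimit omega0_ne_zero isSuccLimit_omega0).1 hδ
    obtain ⟨K, rfl⟩ := lt_omega0.1 hc
    obtain ⟨y, hy, hb, hK⟩ := hclimb hbad K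
    have hCBy0 : CB y ≠ 0 := (zero_le.trans_lt hb).ne'
    have hy0 : y ≠ 0 := fun h => hCBy0 (by rw [h, CB_zero'])
    have h1 : omega0 ^ (K : Ordinal) ≤ y :=
      le_trans (opow_le_opow_right omega0_pos hK) (opow_CB_le hy0)
    have h2 : y < δ := hsub hy
    exact absurd (lt_of_le_of_lt h1 h2) (not_lt.2 hδc.le)
  · exact heq.symm
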